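/- Fix n ≥ 1, r odd with 1 ≤ r ≤ n, and g ≥ 2. Define for τ ∈ (0, π/g) the principal curvatures k_i(τ) = cot(τ + (i−1)π/g), i = 1,...,g with multiplicities m_i summing to n, and H_r(τ) the r-th elementary symmetric polynomial in the n principal curvatures (with multiplicity). If m₁ ≥ r, then there exists δ > 0 such that for all τ₀ ∈ (0, δ): H_r(τ₀) > 0 and τ ↦ H_r(τ₀ − τ) is strictly increasing on [0, τ₀). -/

import Mathlib

open Real

lemma my_esymm_zero (s : Multiset ℝ) : s.esymm 0 = 1 := by
  simp [Multiset.esymm, Multiset.powersetCard_zero_left]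

lemma my_esymm_cons (a : ℝ) (s : Multiset ℝ) (k : ℕ) :
    (a ::ₘ s).esymm (k + 1) = s.esymm (k + 1) + a * s.esymm k := by
  unfold Multiset.esymm
  rw [Multiset.powersetCard_cons, Multiset.map_add, Multiset.sum_add, Multiset.map_map]
  congr 1
  rw [show (Multiset.prod ∘ Multiset.cons a) = fun t : Multiset ℝ => a * t.prod from
    funext fun t => by simp [Multiset.prod_cons], Multiset.sum_map_mul_left]

lemma my_esymm_nil (k : ℕ) : (0 : Multiset ℝ).esymm (k + 1) = 0 := by
  simp [Multiset.esymm, Multiset.powersetCard_zero_right]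

lemma my_esymm_replicate (mm : ℕ) (x : ℝ) : ∀ k : ℕ,
    (Multiset.replicate mm x).esymm k = (mm.choose k : ℝ) * x ^ k := by
  induction mm with
  | zero =>
    intro k
    cases k with
    | zero => simp [my_esymm_zero]
    | succ j => simp [Multiset.replicate_zero, my_esymm_nil, Nat.choose_eq_zero_of_lt]
  | succ mm ih =>
    intro k
    cases k with
    | zero => simp [my_esymm_zero]
    | succ j =>
      rw [Multiset.replicate_succ, my_esymm_cons, ih, ih, Nat.choose_succ_succ]
      push_cast
      ring

lemma my_esymm_add_zeros (t : Multiset ℝ) (ht : ∀ x ∈ t, x = 0) (s : Multiset ℝ) (k : ℕ) :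
    (s + t).esymm (k + 1) = s.esymm (k + 1) := by
  induction t using Multiset.induction_on with
  | empty => simp
  | cons a t ih =>
    rw [Multiset.add_cons, show a = 0 from ht a (Multiset.mem_cons_self a t), my_esymm_cons,
      ih (fun x hx => ht x (Multiset.mem_cons_of_mem hx)), zero_mul, add_zero]

lemma my_contDiffOn_esymm (U : Set ℝ) (l : Multiset (ℝ → ℝ))
    (hl : ∀ f ∈ l, ContDiffOn ℝ 1 f U) (k : ℕ) :
    ContDiffOn ℝ 1 (fun τ => (l.map (fun f => f τ)).esymm k) U := by
  induction l using Multiset.induction_on generalizing k with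
  | empty =>
    cases k with
    | zero => simpa [my_esymm_zero] using contDiffOn_const (c := (1:ℝ))
    | succ j => simpa [my_esymm_nil] using contDiffOn_const (c := (0:ℝ))
  | cons f l ih =>
    cases k with
    | zero => simpa [my_esymm_zero] using contDiffOn_const (c := (1:ℝ))
    | succ j =>
      simp only [Multiset.map_cons, my_esymm_cons]
      exact (ih (fun f hf => hl f (Multiset.mem_cons_of_mem hf)) (j + 1)).add
        ((hl f (Multiset.mem_cons_self f l)).mul
          (ih (fun f hf => hl f (Multiset.mem_cons_of_mem hf)) j))

set_option maxHeartbeats 2000000 in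
theorem stmt_19 (n r g : ℕ) (hn : 1 ≤ n) (hr : 1 ≤ r) (hrn : r ≤ n) (hrodd : Odd r)
    (hg : 2 ≤ g) (m : Fin g → ℕ) (hm : ∀ i, 1 ≤ m i) (hsum : ∑ i, m i = n)
    (hm₁ : r ≤ m ⟨0, by omega⟩)
    (H : ℝ → ℝ)
    (hH : ∀ τ, H τ =
      Multiset.esymm
        ((Finset.univ : Finset (Fin g)).val.bind fun i =>
          Multiset.replicate (m i)
            (Real.cos (τ + (i : ℕ) * π / g) / Real.sin (τ + (i : ℕ) * π / g))) r) :
    ∃ δ > 0, δ ≤ π / g ∧ ∀ τ₀ ∈ Set.Ioo (0 : ℝ) δ,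
      0 < H τ₀ ∧ StrictMonoOn (fun τ => H (τ₀ - τ)) (Set.Ico (0 : ℝ) τ₀) := by
  obtain ⟨p, hp⟩ : ∃ p, r = p + 1 := ⟨r - 1, (Nat.succ_pred_eq_of_pos hr).symm⟩
  have hgR : (0:ℝ) < (g:ℝ) := by positivity
  set a : ℝ := π / (2 * g) with ha_def
  have ha : 0 < a := by positivity
  have h2a : π / (g:ℝ) = 2 * a := by rw [ha_def]; field_simp
  have haπ4 : a ≤ π / 4 := by
    rw [ha_def, div_le_div_iff₀ (by positivity) (by norm_num)]
    nlinarith [pi_pos, (show (2:ℝ) ≤ g by exact_mod_cast hg)]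
  set i0 : Fin g := ⟨0, by omega⟩ with hi0_def
  set U : Set ℝ := Set.Ioo (-a) a with hU_def
  have hUopen : IsOpen U := isOpen_Ioo
  have h0U : (0:ℝ) ∈ U := ⟨by linarith, ha⟩
  -- F i : the scaled principal curvature functions
  set F : Fin g → ℝ → ℝ := fun i =>
    if i = i0 then (fun _ => (1:ℝ))
    else fun τ => (Real.cos (τ + (i:ℕ) * π / g) / Real.sin (τ + (i:ℕ) * π / g)) *
      (Real.sin τ / Real.cos τ) with hF_def
  set l : Multiset (ℝ → ℝ) :=
    (Finset.univ : Finset (Fin g)).val.bind fun i => Multiset.replicate (m i) (F i) with hl_def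
  set G : ℝ → ℝ := fun τ => ((l.map (fun f => f τ)).esymm r) with hG_def
  -- positivity of shifted sines on U
  have hsin_shift : ∀ i : Fin g, i ≠ i0 → ∀ τ ∈ U, 0 < Real.sin (τ + (i:ℕ) * π / g) := by
    intro i hi τ hτ
    have hi1 : 1 ≤ (i:ℕ) := by
      rcases Nat.eq_zero_or_pos (i:ℕ) with h | h
      · exact absurd (Fin.ext (by simpa [hi0_def] using h)) hi
      · exact h
    have hig : (i:ℕ) ≤ g - 1 := by omega
    have hi1R : (1:ℝ) ≤ (i:ℕ) := by exact_mod_cast hi1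
    have higR : ((i:ℕ):ℝ) ≤ (g:ℝ) - 1 := by
      have : ((i:ℕ):ℝ) ≤ ((g - 1 : ℕ):ℝ) := by exact_mod_cast hig
      have hg1 : ((g - 1 : ℕ):ℝ) = (g:ℝ) - 1 := by
        have : (1:ℕ) ≤ g := by omega
        push_cast [this]; ring
      linarith [this, hg1.le]
    have hlow : π / (g:ℝ) ≤ (i:ℕ) * π / g := by
      rw [div_le_div_iff₀ hgR hgR]
      nlinarith [mul_nonneg (mul_nonneg (sub_nonneg.2 hi1R) pi_pos.le) hgR.le]
    have hhigh : (i:ℕ) * π / g ≤ π - π / g := by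
      have h1 : ((i:ℕ) * π) / (g:ℝ) ≤ (π * g - π) / g := by
        rw [div_le_div_iff₀ hgR hgR]
        nlinarith [mul_nonneg (mul_nonneg (sub_nonneg.2 higR) pi_pos.le) hgR.le,
          mul_nonneg (sub_nonneg.2 higR) pi_pos.le]
      have h2 : (π * (g:ℝ) - π) / g = π - π / g := by field_simp
      linarith [h1, h2.le, h2.ge]
    apply Real.sin_pos_of_pos_of_lt_pi
    · have := hτ.1; linarith
    · have := hτ.2; linarith
  have hcosU : ∀ τ ∈ U, 0 < Real.cos τ := by
    intro τ hτ
    apply Real.cos_pos_of_mem_Ioo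
    constructor
    · have := hτ.1; linarith [pi_pos]
    · have := hτ.2; linarith [pi_pos]
  -- smoothness of the entries
  have hFsmooth : ∀ f ∈ l, ContDiffOn ℝ 1 f U := by
    intro f hf
    rw [hl_def] at hf
    obtain ⟨i, _, hfi⟩ := Multiset.mem_bind.1 hf
    have hfi' : f = F i := Multiset.eq_of_mem_replicate hfi
    subst hfi'
    by_cases hii : i = i0
    · rw [hF_def]; simp only [hii, if_pos rfl]; exact contDiffOn_const
    · rw [hF_def]; simp only [if_neg hii]
      have h1 : ContDiffOn ℝ 1 (fun τ => Real.cos (τ + (i:ℕ) * π / g) /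
          Real.sin (τ + (i:ℕ) * π / g)) U := by
        apply ContDiffOn.div
        · exact ((contDiff_id.add contDiff_const).cos).contDiffOn
        · exact ((contDiff_id.add contDiff_const).sin).contDiffOn
        · exact fun τ hτ => (hsin_shift i hii τ hτ).ne'
      have h2 : ContDiffOn ℝ 1 (fun τ => Real.sin τ / Real.cos τ) U := by
        apply ContDiffOn.div
        · exact (Real.contDiff_sin.of_le le_top).contDiffOn
        · exact (Real.contDiff_cos.of_le le_top).contDiffOn
        · exact fun τ hτ => (hcosU τ hτ).ne'
      exact h1.mul h2
  have hG : ContDiffOn ℝ 1 G U := my_contDiffOn_esymm U l hFsmooth r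
  clear_value G
  -- value of G at 0
  have hmap : ∀ τ : ℝ, l.map (fun f => f τ) =
      (Finset.univ : Finset (Fin g)).val.bind fun i => Multiset.replicate (m i) (F i τ) := by
    intro τ
    rw [hl_def, Multiset.map_bind]
    exact Multiset.bind_congr (fun i _ => Multiset.map_replicate _ _ _)
  have hG0 : G 0 = ((m i0).choose r : ℝ) := by
    have huniv : (Finset.univ : Finset (Fin g)) = insert i0 (Finset.univ.erase i0) :=
      (Finset.insert_erase (Finset.mem_univ i0)).symm
    have hval : (Finset.univ : Finset (Fin g)).val = i0 ::ₘ (Finset.univ.erase i0).val := by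
      conv_lhs => rw [huniv]
      exact Finset.insert_val_of_notMem (Finset.notMem_erase i0 _)
    have hsplit : l.map (fun f => f 0) = Multiset.replicate (m i0) 1 +
        ((Finset.univ.erase i0).val.bind fun i => Multiset.replicate (m i) (F i 0)) := by
      rw [hmap 0, hval, Multiset.cons_bind]
      congr 1
    have hT0 : ∀ x ∈ ((Finset.univ.erase i0).val.bind fun i =>
        Multiset.replicate (m i) (F i 0)), x = 0 := by
      intro x hx
      obtain ⟨i, hi, hxi⟩ := Multiset.mem_bind.1 hx
      have hii : i ≠ i0 := Finset.ne_of_mem_erase (s := Finset.univ) hi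
      rw [Multiset.eq_of_mem_replicate hxi, hF_def]
      simp [if_neg hii]
    rw [hG_def]
    simp only [hsplit, hp]
    rw [my_esymm_add_zeros _ hT0, my_esymm_replicate, one_pow, mul_one]
  have hc₀ : (1:ℝ) ≤ ((m i0).choose r : ℝ) := by
    exact_mod_cast Nat.one_le_iff_ne_zero.2 (Nat.choose_pos hm₁).ne'
  -- the key identity
  have key : ∀ τ ∈ Set.Ioo (0:ℝ) a, H τ = G τ * (Real.cos τ / Real.sin τ) ^ r := by
    intro τ hτ
    have hτU : τ ∈ U := ⟨by linarith [hτ.1], hτ.2⟩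
    have hsinτ : 0 < Real.sin τ :=
      Real.sin_pos_of_pos_of_lt_pi hτ.1 (by linarith [pi_pos, hτ.2])
    have hcosτ : 0 < Real.cos τ := hcosU τ hτU
    have hmapeq : (((Finset.univ : Finset (Fin g)).val.bind fun i =>
        Multiset.replicate (m i)
          (Real.cos (τ + (i : ℕ) * π / g) / Real.sin (τ + (i : ℕ) * π / g))).map
            (fun x => (Real.sin τ / Real.cos τ) * x)) = l.map (fun f => f τ) := by
      rw [hmap τ, Multiset.map_bind]
      apply Multiset.bind_congr
      intro i _
      rw [Multiset.map_replicate]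
      congr 1
      by_cases hii : i = i0
      · subst hii
        rw [hF_def]
        simp only [if_pos rfl]
        have : ((i0:ℕ):ℝ) = 0 := by rw [hi0_def]; norm_num
        rw [this]
        simp only [zero_mul, zero_div, add_zero, eq_self_iff_true, ↓reduceIte]
        field_simp
      · rw [hF_def]; simp only [if_neg hii]; ring
    have hscale := Multiset.pow_smul_esymm (Real.sin τ / Real.cos τ) r
      ((Finset.univ : Finset (Fin g)).val.bind fun i =>
        Multiset.replicate (m i)
          (Real.cos (τ + (i : ℕ) * π / g) / Real.sin (τ + (i : ℕ) * π / g)))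
    simp only [smul_eq_mul] at hscale
    rw [hmapeq] at hscale
    have hGτ : (Real.sin τ / Real.cos τ) ^ r * H τ = G τ := by
      rw [hH τ, hG_def]; exact hscale
    have hcc : (Real.sin τ / Real.cos τ) * (Real.cos τ / Real.sin τ) = 1 := by
      field_simp
    calc H τ = ((Real.sin τ / Real.cos τ) * (Real.cos τ / Real.sin τ)) ^ r * H τ := by
          rw [hcc, one_pow, one_mul]
      _ = ((Real.sin τ / Real.cos τ) ^ r * H τ) * (Real.cos τ / Real.sin τ) ^ r := by ring
      _ = G τ * (Real.cos τ / Real.sin τ) ^ r := by rw [hGτ]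
  -- derivative of H on (0, a)
  have hHderiv : ∀ x ∈ Set.Ioo (0:ℝ) a, HasDerivAt H
      (deriv G x * (Real.cos x / Real.sin x) ^ r +
        G x * ((r:ℝ) * (Real.cos x / Real.sin x) ^ (r - 1) * (-1 / Real.sin x ^ 2))) x := by
    intro x hx
    have hxU : x ∈ U := ⟨by linarith [hx.1], hx.2⟩
    have hsinx : 0 < Real.sin x :=
      Real.sin_pos_of_pos_of_lt_pi hx.1 (by linarith [pi_pos, hx.2])
    have hGd : HasDerivAt G (deriv G x) x :=
      ((hG.differentiableOn one_ne_zero).differentiableAt (hUopen.mem_nhds hxU)).hasDerivAt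
    have hcot : HasDerivAt (fun τ => Real.cos τ / Real.sin τ) (-1 / Real.sin x ^ 2) x := by
      have hd := (Real.hasDerivAt_cos x).div (Real.hasDerivAt_sin x) hsinx.ne'
      have hpy := Real.sin_sq_add_cos_sq x
      have : (-Real.sin x * Real.sin x - Real.cos x * Real.cos x) = -1 := by nlinarith
      rw [this] at hd
      exact hd
    have hprod := hGd.mul (hcot.pow r)
    have hev : (fun τ => G τ * (Real.cos τ / Real.sin τ) ^ r) =ᶠ[nhds x] H :=
      Filter.eventuallyEq_of_mem (isOpen_Ioo.mem_nhds hx) (fun τ hτ => (key τ hτ).symm)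
    exact hprod.congr_of_eventuallyEq hev.symm
  -- bounds from continuity at 0
  have hG'cont : ContinuousAt (deriv G) 0 :=
    (hG.continuousOn_deriv_of_isOpen hUopen le_rfl).continuousAt (hUopen.mem_nhds h0U)
  have hGcont : ContinuousAt G 0 := (hG.continuousOn).continuousAt (hUopen.mem_nhds h0U)
  set B : ℝ := |deriv G 0| + 1 with hB_def
  have hB1 : 1 ≤ B := by rw [hB_def]; linarith [abs_nonneg (deriv G 0)]
  clear_value B
  obtain ⟨δ₁, hδ₁pos, hδ₁⟩ := Metric.continuousAt_iff.1 hG'cont 1 one_pos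
  obtain ⟨δ₂, hδ₂pos, hδ₂⟩ := Metric.continuousAt_iff.1 hGcont (1/2) (by norm_num)
  set δ : ℝ := min (min δ₁ δ₂) (min (a/2) (1/(4*B+2))) with hδ_def
  have hδpos : 0 < δ := by
    apply lt_min (lt_min hδ₁pos hδ₂pos) (lt_min (by linarith) (div_pos one_pos (by linarith)))
  have hδa2 : δ ≤ a/2 := le_trans (min_le_right _ _) (min_le_left _ _)
  have hδB : δ ≤ 1/(4*B+2) := le_trans (min_le_right _ _) (min_le_right _ _)
  have hδ1' : δ ≤ δ₁ := le_trans (min_le_left _ _) (min_le_left _ _)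
  have hδ2' : δ ≤ δ₂ := le_trans (min_le_left _ _) (min_le_right _ _)
  clear_value δ
  -- pointwise facts on (0, δ)
  have hfacts : ∀ x ∈ Set.Ioo (0:ℝ) δ, x ∈ Set.Ioo (0:ℝ) a ∧ (1/2:ℝ) ≤ G x ∧
      0 < Real.cos x / Real.sin x ∧ deriv G x * (Real.cos x / Real.sin x) ^ r +
        G x * ((r:ℝ) * (Real.cos x / Real.sin x) ^ (r - 1) * (-1 / Real.sin x ^ 2)) < 0 := by
    intro x hx
    have hxa : x ∈ Set.Ioo (0:ℝ) a := ⟨hx.1, by linarith [hx.2, hδa2, ha]⟩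
    have hsinx : 0 < Real.sin x :=
      Real.sin_pos_of_pos_of_lt_pi hxa.1 (by linarith [pi_pos, hxa.2])
    have hcosx : (1/2:ℝ) < Real.cos x := by
      have h3 : x < π/3 := by
        have : a / 2 ≤ π / 8 := by linarith
        linarith [hx.2, hδa2, pi_pos]
      calc (1/2:ℝ) = Real.cos (π/3) := Real.cos_pi_div_three.symm
        _ < Real.cos x := Real.cos_lt_cos_of_nonneg_of_le_pi hxa.1.le
            (by linarith [pi_pos]) h3
    have hsinlt : Real.sin x < x := Real.sin_lt hxa.1
    have hdistx : dist x 0 < δ := by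
      rw [Real.dist_eq, sub_zero, abs_of_pos hx.1]; exact hx.2
    have hGx : (1/2:ℝ) ≤ G x := by
      have := hδ₂ (lt_of_lt_of_le hdistx hδ2')
      rw [Real.dist_eq] at this
      have habs := abs_sub_lt_iff.1 this
      rw [hG0] at habs
      linarith [habs.1, habs.2, hc₀]
    have hdGx : deriv G x ≤ B := by
      have := hδ₁ (lt_of_lt_of_le hdistx hδ1')
      rw [Real.dist_eq] at this
      have habs := abs_sub_lt_iff.1 this
      have := habs.1
      have h2 := le_abs_self (deriv G 0)
      rw [hB_def]; linarith
    obtain ⟨ct, hct_def⟩ : ∃ c : ℝ, c = Real.cos x / Real.sin x := ⟨_, rfl⟩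
    have hctpos : 0 < ct := by rw [hct_def]; exact div_pos (by linarith) hsinx
    have hctlarge : 2*B + 1 < ct := by
      have h1 : (2*B + 1) < (1/2)/x := by
        rw [lt_div_iff₀ hx.1]
        have hxB : x < 1/(4*B+2) := lt_of_lt_of_le hx.2 hδB
        have h4B : (0:ℝ) < 4*B+2 := by linarith
        rw [lt_div_iff₀ h4B] at hxB
        nlinarith
      have h2 : (1/2)/x < ct := by
        rw [hct_def, div_lt_div_iff₀ hx.1 hsinx]
        nlinarith
      linarith
    refine ⟨hxa, hGx, hct_def ▸ hctpos, ?_⟩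
    have hbr : deriv G x * ct - G x * ((p:ℝ)+1) / Real.sin x ^ 2 < 0 := by
      have e1 : deriv G x * ct ≤ B * ct := mul_le_mul_of_nonneg_right hdGx hctpos.le
      have e2 : B * ct < (1/2) * ct^2 := by nlinarith [mul_pos hctpos (show (0:ℝ) < ct/2 - B by linarith)]
      have e3 : (1/2) * ct^2 ≤ G x * ((p:ℝ)+1) / Real.sin x ^ 2 := by
        have hsin2 : (0:ℝ) < Real.sin x ^ 2 := by positivity
        have hinv : (0:ℝ) < (Real.sin x ^ 2)⁻¹ := by positivity
        have hcos2 : Real.cos x ^ 2 ≤ 1 := by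
          nlinarith [Real.sin_sq_add_cos_sq x, sq_nonneg (Real.sin x)]
        have hnum : (1/2:ℝ) * Real.cos x ^ 2 ≤ G x * ((p:ℝ)+1) := by
          have hp0 : (0:ℝ) ≤ (p:ℝ) := by positivity
          nlinarith
        have e4 : ct^2 = Real.cos x ^ 2 * (Real.sin x ^ 2)⁻¹ := by
          rw [hct_def, div_pow, div_eq_mul_inv]
        have e5 : G x * ((p:ℝ)+1) / Real.sin x ^ 2 =
            (G x * ((p:ℝ)+1)) * (Real.sin x ^ 2)⁻¹ := div_eq_mul_inv _ _
        rw [e4, e5]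
        nlinarith [mul_le_mul_of_nonneg_right hnum hinv.le]
      linarith
    have hrw : deriv G x * ct ^ r + G x * ((r:ℝ) * ct ^ (r - 1) * (-1 / Real.sin x ^ 2)) =
        ct ^ p * (deriv G x * ct - G x * ((p:ℝ)+1) / Real.sin x ^ 2) := by
      have hsin2 : Real.sin x ^ 2 ≠ 0 := by positivity
      rw [hp]
      simp only [Nat.add_sub_cancel]
      push_cast
      field_simp
      ring
    rw [← hct_def, hrw]
    exact mul_neg_of_pos_of_neg (pow_pos hctpos p) hbr
  -- H is strictly decreasing on (0, δ)
  have hanti : StrictAntiOn H (Set.Ioo (0:ℝ) δ) := by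
    apply strictAntiOn_of_deriv_neg (convex_Ioo 0 δ)
    · intro x hx
      exact ((hHderiv x (hfacts x hx).1).continuousAt).continuousWithinAt
    · rw [interior_Ioo]
      intro x hx
      rw [(hHderiv x (hfacts x hx).1).deriv]
      exact (hfacts x hx).2.2.2
  refine ⟨δ, hδpos, ?_, ?_⟩
  · rw [h2a]; linarith
  intro τ₀ hτ₀
  obtain ⟨hxa, hGx, hctpos, _⟩ := hfacts τ₀ hτ₀
  constructor
  · rw [key τ₀ hxa]
    exact mul_pos (by linarith) (pow_pos hctpos r)
  · intro x hx y hy hxy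
    have hτ₀δ : τ₀ < δ := hτ₀.2
    have hxm : τ₀ - x ∈ Set.Ioo (0:ℝ) δ := ⟨by linarith [hx.2], by linarith [hx.1]⟩
    have hym : τ₀ - y ∈ Set.Ioo (0:ℝ) δ := ⟨by linarith [hy.2], by linarith [hy.1]⟩
    exact hanti hym hxm (by linarith)
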